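/- The set of equilibrium states of the type-3 fractional Stokes system, i.e. the set of (u¹, u², u³) ∈ ℝ³ satisfying (l₂−l₃)u²u³ − b₃u² = 0, (l₃−l₁)u³u¹ + b₃u¹ − b₁u³ = 0 and (l₁−l₂)u¹u² + b₁u² = 0, is exactly {(b₁/(l₂−l₁), m, b₃/(l₂−l₃)) : m ∈ ℝ} ∪ {(b₁m/(b₃ + (l₃−l₁)m), 0, m) : m ∈ ℝ, b₃ + (l₃−l₁)m ≠ 0}. -/

import Mathlib

/-- Equilibrium states of the type-3 fractional Stokes system. -/
theorem stmt_4 (l₁ l₂ l₃ b₁ b₃ : ℝ) (h₁₂ : l₁ ≠ l₂) (h₂₃ : l₂ ≠ l₃) (h₃₁ : l₃ ≠ l₁)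
    (hb₁ : b₁ ≠ 0) (hb₃ : b₃ ≠ 0) :
    {u : ℝ × ℝ × ℝ |
        (l₂ - l₃) * u.2.1 * u.2.2 - b₃ * u.2.1 = 0 ∧
        (l₃ - l₁) * u.2.2 * u.1 + b₃ * u.1 - b₁ * u.2.2 = 0 ∧
        (l₁ - l₂) * u.1 * u.2.1 + b₁ * u.2.1 = 0} =
    {u : ℝ × ℝ × ℝ | ∃ m : ℝ, u = (b₁ / (l₂ - l₁), m, b₃ / (l₂ - l₃))} ∪
      {u : ℝ × ℝ × ℝ | ∃ m : ℝ, b₃ + (l₃ - l₁) * m ≠ 0 ∧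
        u = (b₁ * m / (b₃ + (l₃ - l₁) * m), 0, m)} := by
  have h21 : l₂ - l₁ ≠ 0 := sub_ne_zero.mpr (Ne.symm h₁₂)
  have h23 : l₂ - l₃ ≠ 0 := sub_ne_zero.mpr h₂₃
  ext ⟨x, y, z⟩
  simp only [Set.mem_setOf_eq, Set.mem_union, Prod.mk.injEq]
  constructor
  · rintro ⟨e1, e2, e3⟩
    by_cases hy : y = 0
    · subst hy
      right
      refine ⟨z, ?_, ?_, rfl, rfl⟩
      · intro h
        have hx : x * (b₃ + (l₃ - l₁) * z) = b₁ * z := by nlinarith [e2]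
        rw [h, mul_zero] at hx
        have hz : z = 0 := by
          rcases mul_eq_zero.mp hx.symm with h' | h'
          · exact absurd h' hb₁
          · exact h'
        rw [hz] at h; simp at h; exact hb₃ h
      · have h : b₃ + (l₃ - l₁) * z ≠ 0 := by
          intro h
          have hx : x * (b₃ + (l₃ - l₁) * z) = b₁ * z := by nlinarith [e2]
          rw [h, mul_zero] at hx
          have hz : z = 0 := by
            rcases mul_eq_zero.mp hx.symm with h' | h'
            · exact absurd h' hb₁
            · exact h'
          rw [hz] at h; simp at h; exact hb₃ h
        field_simp
        rw [eq_div_iff (by rwa [mul_comm] at h)]; nlinarith [e2]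
    · left
      refine ⟨y, ?_, rfl, ?_⟩
      · have : (l₁ - l₂) * x + b₁ = 0 := by
          rcases mul_eq_zero.mp (show ((l₁ - l₂) * x + b₁) * y = 0 by nlinarith [e3]) with h | h
          · exact h
          · exact absurd h hy
        field_simp
        nlinarith [this]
      · have : (l₂ - l₃) * z - b₃ = 0 := by
          rcases mul_eq_zero.mp (show y * ((l₂ - l₃) * z - b₃) = 0 by nlinarith [e1]) with h | h
          · exact absurd h hy
          · exact h
        field_simp
        nlinarith [this]
  · rintro (⟨m, hx, hy, hz⟩ | ⟨m, hm, hx, hy, hz⟩)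
    · subst hx hy hz
      refine ⟨?_, ?_, ?_⟩
      · field_simp; ring
      · field_simp; ring
      · field_simp; ring
    · subst hx hy hz
      refine ⟨by ring, ?_, by ring⟩
      field_simp
      ring
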